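/- Let 𝔅' be an (n−1)×(n−1) symmetric zero-diagonal matrix over F_{2^d} that is full rank over F_2 (as an (n−1) × (n−1)d binary matrix). Then the number of vectors b ∈ (F_{2^d})^{n−1} such that the n×n matrix [[0, b],[bᵀ, 𝔅']] is symmetric, zero-diagonal, and full rank over F_2 equals 2^{d(n−1)} − 2^{n−1}. -/

import Mathlib

open Matrix

/-- The bordered matrix `[[0, b],[bᵀ, B']]`. -/
def borderMat {m : ℕ} {F : Type} [Zero F] (B' : Matrix (Fin m) (Fin m) F)
    (b : Fin m → F) : Matrix (Unit ⊕ Fin m) (Unit ⊕ Fin m) F :=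
  Matrix.fromBlocks 0 (Matrix.of fun _ j => b j) (Matrix.of fun i _ => b i) B'

section Aux

variable {M : Type*} [AddCommMonoid M] [Module (ZMod 2) M]

lemma z2_add_self (x : M) : x + x = 0 := by
  have h : ((1 : ZMod 2) + 1) • x = x + x := by rw [add_smul, one_smul]
  have h2 : ((1 : ZMod 2) + 1) = 0 := by decide
  rw [h2, zero_smul] at h
  exact h.symm

lemma sum_symm_zero {m : ℕ} (t : Fin m → Fin m → M)
    (hs : ∀ i j, t i j = t j i) (hd : ∀ i, t i i = 0) :
    ∑ i, ∑ j, t i j = 0 := by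
  classical
  rw [← Finset.sum_product']
  rw [← Finset.diag_union_offDiag (Finset.univ : Finset (Fin m)),
    Finset.sum_union (Finset.disjoint_diag_offDiag _)]
  have h1 : ∑ p ∈ (Finset.univ : Finset (Fin m)).diag, t p.1 p.2 = 0 := by
    rw [Finset.sum_diag]
    exact Finset.sum_eq_zero fun i _ => hd i
  have h2 : ∑ p ∈ (Finset.univ : Finset (Fin m)).offDiag, t p.1 p.2 = 0 := by
    refine Finset.sum_involution (fun p _ => (p.2, p.1)) ?_ ?_ ?_ ?_
    · intro p _
      rw [hs p.2 p.1]
      exact z2_add_self _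
    · intro p hp _
      simp only [Finset.mem_offDiag] at hp
      intro h
      rw [Prod.ext_iff] at h
      exact hp.2.2 (by first | exact h.1 | exact h.1.symm | exact h.2 | exact h.2.symm)
    · intro p hp
      simp only [Finset.mem_offDiag] at hp ⊢
      exact ⟨hp.2.1, hp.1, fun h => hp.2.2 h.symm⟩
    · intro p _
      rfl
  rw [h1, h2, add_zero]

end Aux

/-- If `𝔅'` is an `(n-1) × (n-1)` symmetric zero-diagonal matrix over
`F_{2^d}` that is full rank over `F₂` (its rows are `F₂`-linearly independent), then the
number of border vectors `b` making `[[0,b],[bᵀ,𝔅']]` symmetric, zero-diagonal, and full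
rank over `F₂` is `2^{d(n-1)} - 2^{n-1}`. -/
theorem stmt8 (d n : ℕ) (hd : 1 ≤ d) (hn : 3 ≤ n)
    (F : Type) [Field F] [Fintype F] [Algebra (ZMod 2) F]
    (hF : Fintype.card F = 2 ^ d)
    (B' : Matrix (Fin (n - 1)) (Fin (n - 1)) F)
    (hsymm : B'.IsSymm) (hdiag : ∀ i, B' i i = 0)
    (hrank : LinearIndependent (ZMod 2) (fun i => B' i)) :
    Nat.card {b : Fin (n - 1) → F //
        (borderMat B' b).IsSymm ∧ (∀ i, borderMat B' b i i = 0) ∧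
        LinearIndependent (ZMod 2) (fun i => borderMat B' b i)}
      = 2 ^ (d * (n - 1)) - 2 ^ (n - 1) := by
  classical
  have hs' : ∀ i j, B' j i = B' i j := fun i j => congrFun (congrFun hsymm i) j
  set S : Submodule (ZMod 2) (Fin (n - 1) → F) :=
    Submodule.span (ZMod 2) (Set.range fun i => B' i) with hS
  -- every bordered matrix is symmetric and zero-diagonal
  have hSymmAll : ∀ b : Fin (n - 1) → F, (borderMat B' b).IsSymm := by
    intro b
    ext i j
    cases i <;> cases j <;>
      simp [borderMat, Matrix.fromBlocks, Matrix.transpose_apply] <;>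
    exact (congrFun (congrFun hsymm _) _)
  have hDiagAll : ∀ (b : Fin (n - 1) → F) i, borderMat B' b i i = 0 := by
    intro b i
    cases i with
    | inl u => simp [borderMat, Matrix.fromBlocks]
    | inr i => simpa [borderMat, Matrix.fromBlocks] using hdiag i
  -- key equivalence: full rank ↔ b ∉ span of the rows of B'
  have hKey : ∀ b : Fin (n - 1) → F,
      LinearIndependent (ZMod 2) (fun i => borderMat B' b i) ↔ b ∉ S := by
    intro b
    constructor
    · -- if b ∈ span, rows are dependent
      intro hli
      intro hb
      rw [hS, Submodule.mem_span_range_iff_exists_fun] at hb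
      obtain ⟨c, hc⟩ := hb
      have := Fintype.linearIndependent_iff.mp hli
        (Sum.elim (fun _ => (1 : ZMod 2)) c) ?_ (Sum.inl ())
      · simp at this
      · funext x
        rw [Fintype.sum_sum_type]
        simp only [Sum.elim_inl, Sum.elim_inr, Finset.sum_apply, Pi.smul_apply,
          Pi.add_apply, Pi.zero_apply]
        cases x with
        | inl u =>
          have hrow : ∀ i : Fin (n - 1), borderMat B' b (Sum.inr i) (Sum.inl u) = b i := by
            intro i; rfl
          have hrow0 : borderMat B' b (Sum.inl ()) (Sum.inl u) = 0 := rfl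
          simp only [Finset.univ_unique, Finset.sum_singleton]
          rw [hrow0, smul_zero, zero_add]
          have hbi : ∀ i : Fin (n - 1), b i = ∑ j, c j • B' j i := by
            intro i
            rw [← hc]
            simp [Finset.sum_apply]
          calc ∑ i, c i • borderMat B' b (Sum.inr i) (Sum.inl u)
              = ∑ i, ∑ j, c i • c j • B' j i := by
                refine Finset.sum_congr rfl fun i _ => ?_
                rw [hrow, hbi i, Finset.smul_sum]
            _ = 0 := by
                refine sum_symm_zero (fun i j => c i • c j • B' j i) ?_ ?_
                · intro i j
                  show c i • c j • B' j i = c j • c i • B' i j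
                  rw [smul_smul, smul_smul, mul_comm]
                  congr 1
                  exact hs' i j
                · intro i
                  show c i • c i • B' i i = 0
                  rw [hdiag i, smul_zero, smul_zero]
        | inr j =>
          have hrow : ∀ i : Fin (n - 1), borderMat B' b (Sum.inr i) (Sum.inr j) = B' i j := by
            intro i; rfl
          have hrow0 : borderMat B' b (Sum.inl ()) (Sum.inr j) = b j := rfl
          simp only [Finset.univ_unique, Finset.sum_singleton]
          rw [hrow0, one_smul]
          have : ∑ i, c i • borderMat B' b (Sum.inr i) (Sum.inr j) = b j := by
            simp_rw [hrow]
            rw [← hc]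
            simp [Finset.sum_apply]
          rw [this]
          exact z2_add_self _
    · -- if b ∉ span, rows are independent
      intro hb
      rw [Fintype.linearIndependent_iff]
      intro g hg
      have hg' : ∀ x, g (Sum.inl ()) • borderMat B' b (Sum.inl ()) x
          + ∑ i, g (Sum.inr i) • borderMat B' b (Sum.inr i) x = 0 := by
        intro x
        have := congrFun hg x
        rw [Fintype.sum_sum_type] at this
        simpa [Finset.sum_apply] using this
      have hg0 : g (Sum.inl ()) = 0 := by
        by_contra h0
        have h1 : g (Sum.inl ()) = 1 := by
          have hall : ∀ x : ZMod 2, x ≠ 0 → x = 1 := by decide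
          exact hall _ h0
        exfalso
        apply hb
        have hbeq : b = ∑ i, g (Sum.inr i) • B' i := by
          funext j
          have := hg' (Sum.inr j)
          rw [h1, one_smul] at this
          have hrow0 : borderMat B' b (Sum.inl ()) (Sum.inr j) = b j := rfl
          have hrow : ∀ i : Fin (n - 1), borderMat B' b (Sum.inr i) (Sum.inr j) = B' i j := by
            intro i; rfl
          rw [hrow0] at this
          simp_rw [hrow] at this
          have h2 : b j + (b j + ∑ i, g (Sum.inr i) • B' i j)
              = b j + 0 := by rw [this]
          rw [add_zero, ← add_assoc, z2_add_self, zero_add] at h2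
          simp only [Finset.sum_apply, Pi.smul_apply]
          exact h2.symm
        rw [hbeq]
        exact Submodule.sum_smul_mem S _ fun i _ =>
          Submodule.subset_span (Set.mem_range_self i)
      have hsum : ∀ j, ∑ i, g (Sum.inr i) • B' i j = 0 := by
        intro j
        have := hg' (Sum.inr j)
        rw [hg0, zero_smul, zero_add] at this
        simpa [borderMat, Matrix.fromBlocks_apply₂₂] using this
      have hzero : ∑ i, g (Sum.inr i) • B' i = 0 := by
        funext j
        simpa [Finset.sum_apply] using hsum j
      have hinr : ∀ i, g (Sum.inr i) = 0 :=
        Fintype.linearIndependent_iff.mp hrank (fun i => g (Sum.inr i)) hzero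
      intro x
      cases x with
      | inl u => exact hg0
      | inr i => exact hinr i
  -- now count
  have hEquiv : Nat.card {b : Fin (n - 1) → F //
      (borderMat B' b).IsSymm ∧ (∀ i, borderMat B' b i i = 0) ∧
        LinearIndependent (ZMod 2) (fun i => borderMat B' b i)}
      = Nat.card {b : Fin (n - 1) → F // b ∉ S} := by
    apply Nat.card_congr
    apply Equiv.subtypeEquivRight
    intro b
    constructor
    · rintro ⟨_, _, h⟩; exact (hKey b).mp h
    · intro h; exact ⟨hSymmAll b, hDiagAll b, (hKey b).mpr h⟩
  rw [hEquiv]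
  letI : Fintype S := Fintype.ofFinite S
  have hcards : Fintype.card S = 2 ^ (n - 1) := by
    have bS : Module.Basis (Fin (n - 1)) (ZMod 2) S := Module.Basis.span hrank
    rw [Module.card_fintype bS, ZMod.card, Fintype.card_fin]
  rw [Nat.card_eq_fintype_card]
  have : Fintype.card {b : Fin (n - 1) → F // b ∉ S}
      = Fintype.card (Fin (n - 1) → F) - Fintype.card {b : Fin (n - 1) → F // b ∈ S} := by
    exact Fintype.card_subtype_compl _
  rw [this]
  have h1 : Fintype.card (Fin (n - 1) → F) = 2 ^ (d * (n - 1)) := by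
    rw [Fintype.card_fun, hF, Fintype.card_fin, ← pow_mul]
  have h2 : Fintype.card {b : Fin (n - 1) → F // b ∈ S} = 2 ^ (n - 1) := by
    rw [← hcards]
  rw [h1, h2]
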